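/- With the setup of the prefix-assortment distribution (weights $u_0=1, u_1,\ldots,u_n > 0$, point $x$ in the MNL polyhedron with $x_1/u_1 \geq \cdots \geq x_n/u_n$, probabilities $\psi_0,\ldots,\psi_n$ on assortments $S_k = \{1,\ldots,k\}$ where $\psi_k = (x_k/u_k - x_{k+1}/u_{k+1})\sum_{\ell=0}^k u_\ell$ for $k < n$ and $\psi_n = (x_n/u_n)\sum_{\ell=0}^n u_\ell$), for every alternative $j \in \{1,\ldots,n\}$ we have $\sum_{k=j}^n \psi_k \cdot \frac{u_j}{\sum_{\ell=0}^k u_\ell} = x_j$. That is, sampling an assortment from this distribution and choosing via MNL realizes choice probability exactly $x_j$ for each alternative $j$. -/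

import Mathlib

open Finset

theorem stmt_1 (n : ℕ) (hn : 1 ≤ n) (u x ψ : ℕ → ℝ)
    (hu : ∀ j ∈ Finset.Icc 1 n, 0 < u j) (hu0 : u 0 = 1)
    (hx : ∀ j ∈ Finset.Icc 1 n, 0 ≤ x j)
    (hfeas : ∀ j ∈ Finset.Icc 1 n, x j / u j ≤ 1 - ∑ ℓ ∈ Finset.Icc 1 n, x ℓ)
    (hx0 : x 0 = 1 - ∑ j ∈ Finset.Icc 1 n, x j)
    (hmono : ∀ j ∈ Finset.Icc 1 (n - 1), x (j + 1) / u (j + 1) ≤ x j / u j)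
    (hψ : ∀ j < n, ψ j = (x j / u j - x (j + 1) / u (j + 1)) * ∑ ℓ ∈ Finset.range (j + 1), u ℓ)
    (hψn : ψ n = x n / u n * ∑ ℓ ∈ Finset.range (n + 1), u ℓ) :
    ∀ j ∈ Finset.Icc 1 n,
      ∑ k ∈ Finset.Icc j n, ψ k * (u j / ∑ ℓ ∈ Finset.range (k + 1), u ℓ) = x j := by
  intro j hj
  simp only [Finset.mem_Icc] at hj
  obtain ⟨hj1, hjn⟩ := hj
  -- positivity of partial sums of u
  have hS : ∀ k ≤ n, (0:ℝ) < ∑ ℓ ∈ Finset.range (k + 1), u ℓ := by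
    intro k hk
    have h0 : ∑ ℓ ∈ Finset.range (k + 1), u ℓ = u 0 + ∑ ℓ ∈ Finset.Ico 1 (k+1), u ℓ := by
      rw [Finset.range_eq_Ico, ← Finset.sum_eq_sum_Ico_succ_bot (by omega)]
    rw [h0, hu0]
    have : (0:ℝ) ≤ ∑ ℓ ∈ Finset.Ico 1 (k+1), u ℓ := by
      apply Finset.sum_nonneg
      intro i hi
      simp only [Finset.mem_Ico] at hi
      exact (hu i (Finset.mem_Icc.mpr ⟨hi.1, by omega⟩)).le
    linarith
  set g : ℕ → ℝ := fun k => if k ≤ n then u j * (x k / u k) else 0 with hg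
  have hterm : ∀ k ∈ Finset.Icc j n,
      ψ k * (u j / ∑ ℓ ∈ Finset.range (k + 1), u ℓ) = g k - g (k + 1) := by
    intro k hk
    simp only [Finset.mem_Icc] at hk
    have hSk := hS k hk.2
    rcases lt_or_eq_of_le hk.2 with hkn | hkn
    · rw [hψ k hkn]
      simp only [hg, if_pos hk.2, if_pos (by omega : k + 1 ≤ n)]
      field_simp
    · subst hkn
      rw [hψn]
      simp only [hg, if_pos le_rfl, if_neg (by omega : ¬ k + 1 ≤ k)]
      rw [show x k / u k * (∑ ℓ ∈ Finset.range (k + 1), u ℓ) *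
          (u j / ∑ ℓ ∈ Finset.range (k + 1), u ℓ) = u j * (x k / u k) *
          ((∑ ℓ ∈ Finset.range (k + 1), u ℓ) / ∑ ℓ ∈ Finset.range (k + 1), u ℓ) by ring,
        div_self hSk.ne', mul_one]
      ring
  rw [Finset.sum_congr rfl hterm]
  have : Finset.Icc j n = Finset.Ico j (n + 1) := by rw [Finset.Ico_add_one_right_eq_Icc]
  rw [this, Finset.sum_Ico_eq_sum_range]
  have := Finset.sum_range_sub' (fun i => g (j + i)) (n + 1 - j)
  have harg : ∀ i, j + (i + 1) = j + i + 1 := fun i => by omega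
  calc ∑ i ∈ Finset.range (n + 1 - j), (g (j + i) - g (j + i + 1))
      = ∑ i ∈ Finset.range (n + 1 - j), ((fun i => g (j + i)) i - (fun i => g (j + i)) (i + 1)) := by
        apply Finset.sum_congr rfl; intro i _; simp [harg i]
    _ = g (j + 0) - g (j + (n + 1 - j)) := Finset.sum_range_sub' (fun i => g (j + i)) (n + 1 - j)
    _ = x j := by
        have h1 : j + 0 = j := by omega
        have h2 : j + (n + 1 - j) = n + 1 := by omega
        rw [h1, h2]
        simp only [hg, if_pos hjn, if_neg (by omega : ¬ n + 1 ≤ n)]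
        have huj := hu j (Finset.mem_Icc.mpr ⟨hj1, hjn⟩)
        field_simp
        ring
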